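/- In ℝ², let μ₀ = ½(δ_{(-1,-1)} + δ_{(1,1)}) and μ₁ = ½(δ_{(-1,1)} + δ_{(1,-1)}). There is no probability measure σ on ℝ² that simultaneously satisfies: (a) the projection of σ onto the x-axis is ½(δ_{-1}+δ_{1}); (b) the projection of σ onto the y-axis is ½(δ_{-1}+δ_{1}); and (c) the projection of σ onto the direction (1/√2, 1/√2) is ½(δ_{-1/√2} + δ_{1/√2}). Consequently no midpoint of a constant-speed SW₂-geodesic between μ₀ and μ₁ exists with these projections. -/

import Mathlib

open MeasureTheory Metric Filter Topology
open scoped ENNReal RealInnerProductSpace Pointwise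

noncomputable section

abbrev Euc (d : ℕ) := EuclideanSpace ℝ (Fin d)

/-- The normalized uniform (rotation-invariant) probability measure on the unit sphere. -/
def uniformSphere (d : ℕ) : Measure (sphere (0 : Euc d) 1) :=
  (((volume : Measure (Euc d)).toSphere) Set.univ)⁻¹ • (volume : Measure (Euc d)).toSphere

/-- Couplings (transport plans) between two measures. -/
def Coupling {X : Type*} [MeasurableSpace X] (μ ν : Measure X) : Set (Measure (X × X)) :=
  {γ | γ.map Prod.fst = μ ∧ γ.map Prod.snd = ν}

/-- Squared 2-Wasserstein distance. -/
def W2sq {X : Type*} [MeasurableSpace X] [Dist X] (μ ν : Measure X) : ℝ≥0∞ :=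
  ⨅ (γ : Measure (X × X)) (_ : γ ∈ Coupling μ ν),
    ∫⁻ p, ENNReal.ofReal (dist p.1 p.2 ^ 2) ∂γ

/-- 2-Wasserstein distance. -/
def W2 {X : Type*} [MeasurableSpace X] [Dist X] (μ ν : Measure X) : ℝ≥0∞ :=
  (W2sq μ ν) ^ (1/2 : ℝ)

/-- Projection (pushforward) of a measure on ℝ^d onto the direction θ. -/
def projMeas (d : ℕ) (μ : Measure (Euc d)) (θ : sphere (0 : Euc d) 1) : Measure ℝ :=
  μ.map (fun x => ⟪x, (θ : Euc d)⟫)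

/-- Squared sliced 2-Wasserstein distance: sphere average of squared Wasserstein distances of
projections. -/
def SW2sq (d : ℕ) (μ ν : Measure (Euc d)) : ℝ≥0∞ :=
  ∫⁻ θ, W2sq (projMeas d μ θ) (projMeas d ν θ) ∂(uniformSphere d)

/-- Sliced 2-Wasserstein distance. -/
def SW2 (d : ℕ) (μ ν : Measure (Euc d)) : ℝ≥0∞ :=
  (SW2sq d μ ν) ^ (1/2 : ℝ)

/-- Finite second moment. -/
def FiniteSecondMoment {X : Type*} [MeasurableSpace X] [Norm X] (μ : Measure X) : Prop :=
  ∫⁻ x, ENNReal.ofReal (‖x‖ ^ 2) ∂μ < ⊤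

/-- Narrow (weak) convergence of a sequence of measures. -/
def NarrowTendsto {X : Type*} [MeasurableSpace X] [TopologicalSpace X]
    (μs : ℕ → Measure X) (μ : Measure X) : Prop :=
  ∀ f : BoundedContinuousFunction X ℝ,
    Tendsto (fun k => ∫ x, f x ∂(μs k)) atTop (𝓝 (∫ x, f x ∂μ))

end

set_option maxHeartbeats 1000000 in
/-- there is no probability measure on ℝ² whose projections onto the x-axis and
y-axis are ½(δ₋₁+δ₁) and whose projection onto the diagonal direction (1/√2,1/√2) is
½(δ_{-1/√2}+δ_{1/√2}); hence the midpoint of an SW₂-geodesic between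
μ₀ = ½(δ_{(-1,-1)}+δ_{(1,1)}) and μ₁ = ½(δ_{(-1,1)}+δ_{(1,-1)}) cannot exist. -/
theorem no_midpoint_measure :
    ¬ ∃ σ : Measure (Euc 2), IsProbabilityMeasure σ ∧
      σ.map (fun x => ⟪x, EuclideanSpace.single (0 : Fin 2) (1 : ℝ)⟫)
        = (1/2 : ℝ≥0∞) • (Measure.dirac (-1 : ℝ) + Measure.dirac (1 : ℝ)) ∧
      σ.map (fun x => ⟪x, EuclideanSpace.single (1 : Fin 2) (1 : ℝ)⟫)
        = (1/2 : ℝ≥0∞) • (Measure.dirac (-1 : ℝ) + Measure.dirac (1 : ℝ)) ∧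
      σ.map (fun x => ⟪x, (Real.sqrt 2)⁻¹ •
          (EuclideanSpace.single (0 : Fin 2) (1 : ℝ) + EuclideanSpace.single (1 : Fin 2) (1 : ℝ))⟫)
        = (1/2 : ℝ≥0∞) • (Measure.dirac (-(Real.sqrt 2)⁻¹) + Measure.dirac ((Real.sqrt 2)⁻¹)) := by
  rintro ⟨σ, hσ, h0, h1, hd⟩
  set c : ℝ := (Real.sqrt 2)⁻¹ with hc
  have hcpos : 0 < c := inv_pos.mpr (Real.sqrt_pos.mpr (by norm_num))
  have e0 : (fun x : Euc 2 => ⟪x, EuclideanSpace.single (0 : Fin 2) (1 : ℝ)⟫)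
      = fun x : Euc 2 => x 0 := funext fun x => by simp [EuclideanSpace.inner_single_right]
  have e1 : (fun x : Euc 2 => ⟪x, EuclideanSpace.single (1 : Fin 2) (1 : ℝ)⟫)
      = fun x : Euc 2 => x 1 := funext fun x => by simp [EuclideanSpace.inner_single_right]
  have ed : (fun x : Euc 2 => ⟪x, c •
        (EuclideanSpace.single (0 : Fin 2) (1 : ℝ) + EuclideanSpace.single (1 : Fin 2) (1 : ℝ))⟫)
      = fun x : Euc 2 => c * (x 0 + x 1) := funext fun x => by
    simp [inner_smul_right, inner_add_right, EuclideanSpace.inner_single_right]; ring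
  rw [e0] at h0; rw [e1] at h1; rw [ed] at hd
  have m0 : Measurable fun x : Euc 2 => x 0 := by measurability
  have m1 : Measurable fun x : Euc 2 => x 1 := by measurability
  have md : Measurable fun x : Euc 2 => c * (x 0 + x 1) := by measurability
  have hms : MeasurableSet (({-1, 1} : Set ℝ)ᶜ) := (by measurability : MeasurableSet ({-1,1} : Set ℝ)).compl
  -- bad sets have measure zero
  have hA : σ ((fun x : Euc 2 => x 0) ⁻¹' ({-1, 1} : Set ℝ)ᶜ) = 0 := by
    rw [← Measure.map_apply m0 hms, h0]
    simp [Measure.dirac_apply' _ hms]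
  have hB : σ ((fun x : Euc 2 => x 1) ⁻¹' ({-1, 1} : Set ℝ)ᶜ) = 0 := by
    rw [← Measure.map_apply m1 hms, h1]
    simp [Measure.dirac_apply' _ hms]
  have hsum : σ ((fun x : Euc 2 => c * (x 0 + x 1)) ⁻¹' {c}) = 1/2 := by
    rw [← Measure.map_apply md (measurableSet_singleton c), hd]
    have hne : -c ∉ ({c} : Set ℝ) := by simp; intro h; linarith
    rw [Measure.smul_apply, Measure.add_apply,
      Measure.dirac_apply' _ (measurableSet_singleton c),
      Measure.dirac_apply' _ (measurableSet_singleton c),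
      Set.indicator_of_notMem hne, Set.indicator_of_mem (Set.mem_singleton c)]
    simp [ENNReal.div_eq_inv_mul]
  have hsub : (fun x : Euc 2 => c * (x 0 + x 1)) ⁻¹' {c}
      ⊆ ((fun x : Euc 2 => x 0) ⁻¹' ({-1, 1} : Set ℝ)ᶜ) ∪
        ((fun x : Euc 2 => x 1) ⁻¹' ({-1, 1} : Set ℝ)ᶜ) := by
    intro x hx
    simp only [Set.mem_preimage, Set.mem_singleton_iff] at hx
    have hx1 : x 0 + x 1 = 1 := by
      have := mul_left_cancel₀ (ne_of_gt hcpos) (by rw [hx]; ring : c * (x 0 + x 1) = c * 1)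
      linarith
    by_contra h
    simp only [Set.mem_union, Set.mem_preimage, Set.mem_compl_iff, Set.mem_insert_iff,
      Set.mem_singleton_iff, not_or, not_not] at h
    have ha : x 0 = -1 ∨ x 0 = 1 := by tauto
    have hb : x 1 = -1 ∨ x 1 = 1 := by tauto
    rcases ha with h1' | h1' <;> rcases hb with h2' | h2' <;> rw [h1', h2'] at hx1 <;> norm_num at hx1
  have hzero : σ ((fun x : Euc 2 => c * (x 0 + x 1)) ⁻¹' {c}) = 0 := by
    have hle := le_trans (measure_mono hsub) (measure_union_le (μ := σ) _ _)
    rw [hA, hB] at hle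
    exact le_antisymm (by simpa using hle) (zero_le)
  rw [hzero] at hsum
  rcases ENNReal.div_eq_zero_iff.mp hsum.symm with h | h
  · exact one_ne_zero h
  · exact ENNReal.ofNat_ne_top h
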